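/- For the Kronecker n-quiver with two vertices a, b (both of nonzero dimension) and n parallel arrows from a to b, the squared norm of the moment map satisfies ‖Φ(ρ)‖² ≥ (1/d_a + 1/d_b)·‖ρ‖⁴ + 2(λ_b − λ_a)‖ρ‖² + λ_a² d_a + λ_b² d_b for every ρ = (ρ₁,…,ρ_n) ∈ 𝒜. -/
import Mathlib


open Matrix

attribute [local instance] Matrix.frobeniusNormedAddCommGroup

/-- Squared Frobenius norm as a sum of `Complex.normSq` of entries. -/
lemma frob_norm_sq_eq {m k : ℕ} (M : Matrix (Fin m) (Fin k) ℂ) :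
    ‖M‖ ^ 2 = ∑ i, ∑ j, Complex.normSq (M i j) := by
  have h : (0:ℝ) ≤ ∑ i, ∑ j, ‖M i j‖ ^ (2:ℝ) := by positivity
  rw [Matrix.frobenius_norm_def, ← Real.rpow_natCast _ 2, ← Real.rpow_mul h]
  norm_num
  congr 1
  ext i
  congr 1
  ext j
  rw [← Complex.normSq_eq_norm_sq]

/-- Expansion of `‖c • 1 + A‖²` entrywise. -/
lemma expand_sq {m : ℕ} (c : ℝ) (A : Matrix (Fin m) (Fin m) ℂ) :
    ∑ i, ∑ j, Complex.normSq (((c:ℂ) • (1 : Matrix (Fin m) (Fin m) ℂ) + A) i j)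
      = c ^ 2 * m + 2 * c * (∑ i, (A i i).re)
        + ∑ i, ∑ j, Complex.normSq (A i j) := by
  have key : ∀ i j : Fin m,
      Complex.normSq (((c:ℂ) • (1 : Matrix (Fin m) (Fin m) ℂ) + A) i j)
        = (if i = j then c ^ 2 + 2 * c * (A i j).re else 0)
          + Complex.normSq (A i j) := by
    intro i j
    by_cases h : i = j <;>
      simp [Matrix.add_apply, Matrix.smul_apply, Matrix.one_apply, h,
        Complex.normSq_apply, Complex.add_re, Complex.add_im] <;> ring
  simp_rw [key, Finset.sum_add_distrib]
  rw [add_right_cancel_iff]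
  have : ∀ i : Fin m, ∑ j, (if i = j then c ^ 2 + 2 * c * (A i j).re else 0)
      = c ^ 2 + 2 * c * (A i i).re := by
    intro i
    rw [Finset.sum_ite_eq (Finset.univ) i (fun j => c ^ 2 + 2 * c * (A i j).re)]
    simp
  simp_rw [this, Finset.sum_add_distrib, Finset.mul_sum]
  simp [Finset.sum_const, mul_comm]

/-- The real part of the trace of `∑ ρⱼᴴρⱼ` equals `∑ ‖ρⱼ‖²` (as sums of normSq). -/
lemma trace_re_eq {m k n : ℕ} (ρ : Fin n → Matrix (Fin k) (Fin m) ℂ) :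
    ∑ i, (((∑ j, (ρ j)ᴴ * ρ j) : Matrix (Fin m) (Fin m) ℂ) i i).re
      = ∑ j, ∑ p, ∑ q, Complex.normSq (ρ j p q) := by
  simp only [Matrix.sum_apply, Matrix.mul_apply, Matrix.conjTranspose_apply,
    Complex.re_sum]
  rw [Finset.sum_comm]
  congr 1; ext j
  rw [Finset.sum_comm]
  congr 1; ext q
  congr 1; ext p
  simp [Complex.normSq_apply, Complex.mul_re]

lemma trace_re_eq' {m k n : ℕ} (ρ : Fin n → Matrix (Fin k) (Fin m) ℂ) :
    ∑ i, (((∑ j, ρ j * (ρ j)ᴴ) : Matrix (Fin k) (Fin k) ℂ) i i).re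
      = ∑ j, ∑ p, ∑ q, Complex.normSq (ρ j p q) := by
  simp only [Matrix.sum_apply, Matrix.mul_apply, Matrix.conjTranspose_apply,
    Complex.re_sum]
  rw [Finset.sum_comm]
  congr 1; ext j
  congr 1; ext p
  congr 1; ext q
  simp [Complex.normSq_apply, Complex.mul_re]

/-- Cauchy–Schwarz: `(Re tr A)² ≤ m * ‖A‖²`. -/
lemma trace_sq_le {m : ℕ} (A : Matrix (Fin m) (Fin m) ℂ) :
    (∑ i, (A i i).re) ^ 2 ≤ m * ∑ i, ∑ j, Complex.normSq (A i j) := by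
  calc (∑ i, (A i i).re) ^ 2
      ≤ (Finset.univ : Finset (Fin m)).card * ∑ i, (A i i).re ^ 2 :=
        sq_sum_le_card_mul_sum_sq
    _ ≤ m * ∑ i, ∑ j, Complex.normSq (A i j) := by
        simp only [Finset.card_univ, Fintype.card_fin]
        apply mul_le_mul_of_nonneg_left _ (by positivity)
        apply Finset.sum_le_sum
        intro i _
        calc (A i i).re ^ 2 ≤ Complex.normSq (A i i) := by
              simp [Complex.normSq_apply]; nlinarith [sq_nonneg (A i i).im]
          _ ≤ ∑ j, Complex.normSq (A i j) :=
              Finset.single_le_sum (fun j _ => Complex.normSq_nonneg _) (Finset.mem_univ i)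

/-- The moment map norm bound for the Kronecker `n`-quiver:
`‖Φ(ρ)‖² ≥ (1/d_a + 1/d_b)‖ρ‖⁴ + 2(λ_b − λ_a)‖ρ‖² + λ_a² d_a + λ_b² d_b`, where
`Φ(ρ) = √-1 (λ_a·id − Σⱼ ρⱼ*ρⱼ, λ_b·id + Σⱼ ρⱼρⱼ*)` and all norms are Frobenius
(trace inner product) norms, with `‖ρ‖² = Σⱼ ‖ρⱼ‖²`. -/
theorem kronecker_moment_map_norm_bound (n da db : ℕ) (hda : 1 ≤ da) (hdb : 1 ≤ db)
    (la lb : ℝ) (ρ : Fin n → Matrix (Fin db) (Fin da) ℂ) :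
    ‖Complex.I • ((la : ℂ) • (1 : Matrix (Fin da) (Fin da) ℂ) - ∑ j, (ρ j)ᴴ * ρ j)‖ ^ 2
        + ‖Complex.I • ((lb : ℂ) • (1 : Matrix (Fin db) (Fin db) ℂ) + ∑ j, ρ j * (ρ j)ᴴ)‖ ^ 2
      ≥ (1 / (da : ℝ) + 1 / (db : ℝ)) * (∑ j, ‖ρ j‖ ^ 2) ^ 2
        + 2 * (lb - la) * (∑ j, ‖ρ j‖ ^ 2) + la ^ 2 * da + lb ^ 2 * db := by
  set A : Matrix (Fin da) (Fin da) ℂ := ∑ j, (ρ j)ᴴ * ρ j with hA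
  set B : Matrix (Fin db) (Fin db) ℂ := ∑ j, ρ j * (ρ j)ᴴ with hB
  set t : ℝ := ∑ j, ∑ p, ∑ q, Complex.normSq (ρ j p q) with ht
  have hρ : (∑ j, ‖ρ j‖ ^ 2) = t := by
    rw [ht]; exact Finset.sum_congr rfl fun j _ => frob_norm_sq_eq (ρ j)
  have hIa : ‖Complex.I • ((la : ℂ) • (1 : Matrix (Fin da) (Fin da) ℂ) - A)‖ ^ 2
      = ‖(la : ℂ) • (1 : Matrix (Fin da) (Fin da) ℂ) - A‖ ^ 2 := by
    rw [frob_norm_sq_eq, frob_norm_sq_eq]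
    simp [Matrix.smul_apply, Complex.normSq_mul]
  have hIb : ‖Complex.I • ((lb : ℂ) • (1 : Matrix (Fin db) (Fin db) ℂ) + B)‖ ^ 2
      = ‖(lb : ℂ) • (1 : Matrix (Fin db) (Fin db) ℂ) + B‖ ^ 2 := by
    rw [frob_norm_sq_eq, frob_norm_sq_eq]
    simp [Matrix.smul_apply, Complex.normSq_mul]
  have hAtr : ∑ i, (A i i).re = t := trace_re_eq ρ
  have hBtr : ∑ i, (B i i).re = t := trace_re_eq' ρ
  have h1 : ‖(la : ℂ) • (1 : Matrix (Fin da) (Fin da) ℂ) - A‖ ^ 2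
      = la ^ 2 * da - 2 * la * t + ∑ i, ∑ j, Complex.normSq (A i j) := by
    rw [frob_norm_sq_eq, sub_eq_add_neg, expand_sq]
    simp only [Matrix.neg_apply, Complex.neg_re, Complex.normSq_neg, Finset.sum_neg_distrib]
    rw [hAtr]; ring
  have h2 : ‖(lb : ℂ) • (1 : Matrix (Fin db) (Fin db) ℂ) + B‖ ^ 2
      = lb ^ 2 * db + 2 * lb * t + ∑ i, ∑ j, Complex.normSq (B i j) := by
    rw [frob_norm_sq_eq, expand_sq, hBtr]
  have hCSa : t ^ 2 ≤ da * ∑ i, ∑ j, Complex.normSq (A i j) := by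
    rw [← hAtr]; exact trace_sq_le A
  have hCSb : t ^ 2 ≤ db * ∑ i, ∑ j, Complex.normSq (B i j) := by
    rw [← hBtr]; exact trace_sq_le B
  have hda' : (0:ℝ) < da := by exact_mod_cast hda
  have hdb' : (0:ℝ) < db := by exact_mod_cast hdb
  have ha2 : (1 / (da:ℝ)) * t ^ 2 ≤ ∑ i, ∑ j, Complex.normSq (A i j) := by
    rw [div_mul_eq_mul_div, one_mul, div_le_iff₀ hda']
    linarith [hCSa]
  have hb2 : (1 / (db:ℝ)) * t ^ 2 ≤ ∑ i, ∑ j, Complex.normSq (B i j) := by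
    rw [div_mul_eq_mul_div, one_mul, div_le_iff₀ hdb']
    linarith [hCSb]
  rw [hρ, hIa, hIb, h1, h2]
  nlinarith [ha2, hb2]
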